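/- arXiv:1901.07285 — 4 statements merged into one kernel-verified Lean document; each statement's English description precedes it below -/
import Mathlib

section
/- For natural numbers p, n ≥ 2, if p^(n-1) divides n!, then p = 2 and n is a power of 2. -/
lemma digits_two_sum_eq_zero {n : ℕ} (h : (Nat.digits 2 n).sum = 0) : n = 0 := by
  by_contra hn
  have h1 := Nat.getLast_digit_ne_zero 2 hn
  have hmem := List.getLast_mem (l := Nat.digits 2 n) (Nat.digits_ne_nil_iff_ne_zero.mpr hn)
  have := List.single_le_sum (fun x (_ : x ∈ Nat.digits 2 n) => Nat.zero_le x) _ hmem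
  omega

lemma digits_two_sum_eq_one : ∀ n : ℕ, (Nat.digits 2 n).sum = 1 → ∃ m, n = 2 ^ m := by
  intro n
  induction n using Nat.strong_induction_on with
  | _ n ih =>
    intro h
    rcases Nat.eq_zero_or_pos n with rfl | hn
    · simp at h
    have hd : Nat.digits 2 n = n % 2 :: Nat.digits 2 (n / 2) :=
      Nat.digits_def' (by norm_num) hn
    rw [hd, List.sum_cons] at h
    rcases Nat.mod_two_eq_zero_or_one n with h2 | h2
    · rw [h2] at h
      obtain ⟨m, hm⟩ := ih (n / 2) (Nat.div_lt_self hn (by norm_num)) (by omega)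
      refine ⟨m + 1, ?_⟩
      rw [pow_succ]
      omega
    · rw [h2] at h
      have hz : (Nat.digits 2 (n / 2)).sum = 0 := by omega
      have := digits_two_sum_eq_zero hz
      exact ⟨0, by simp only [pow_zero]; omega⟩

theorem stmt1 (p n : ℕ) (hp : 2 ≤ p) (hn : 2 ≤ n) (h : p ^ (n - 1) ∣ n.factorial) :
    p = 2 ∧ ∃ m : ℕ, n = 2 ^ m := by
  have hn0 : n ≠ 0 := by omega
  -- every prime divisor of p equals 2
  have key : ∀ q : ℕ, q.Prime → q ∣ p → q = 2 := by
    intro q hq hqp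
    have hdvd : q ^ (n - 1) ∣ n.factorial :=
      dvd_trans (pow_dvd_pow_of_dvd hqp _) h
    have h1 : ((n - 1 : ℕ) : ℕ∞) ≤ emultiplicity q n.factorial :=
      pow_dvd_iff_le_emultiplicity.mp hdvd
    have h2 := Nat.Prime.emultiplicity_factorial_le_div_pred hq n
    have h3 : (n - 1 : ℕ) ≤ n / (q - 1) := by exact_mod_cast h1.trans h2
    by_contra hq2
    have hq3 : 3 ≤ q := by have := hq.two_le; omega
    have h4 : n / (q - 1) ≤ n / 2 := Nat.div_le_div_left (by omega) (by omega)
    have h5 : n - 1 ≤ n / 2 := h3.trans h4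
    have hn2 : n = 2 := by omega
    subst hn2
    simp [Nat.factorial] at hdvd
    have := Nat.le_of_dvd (by norm_num) hdvd
    omega
  obtain hk := Nat.eq_prime_pow_of_unique_prime_dvd (show p ≠ 0 by omega)
    (fun {d} hd hdp => key d hd hdp)
  set k := p.primeFactorsList.length with hkdef
  have hk1 : 1 ≤ k := by
    by_contra hk0
    push_neg at hk0; rw [Nat.lt_one_iff.mp hk0, pow_zero] at hk; omega
  -- multiplicity of 2 in n!
  have hfin : FiniteMultiplicity 2 n.factorial :=
    Nat.finiteMultiplicity_iff.2 ⟨by norm_num, Nat.factorial_pos n⟩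
  have hlt : emultiplicity 2 n.factorial < (n : ℕ∞) :=
    Nat.emultiplicity_two_factorial_lt hn0
  have hdvd2 : 2 ^ (k * (n - 1)) ∣ n.factorial := by
    rw [pow_mul]
    exact hk ▸ h
  have h1 : ((k * (n - 1) : ℕ) : ℕ∞) ≤ emultiplicity 2 n.factorial :=
    pow_dvd_iff_le_emultiplicity.mp hdvd2
  have h2 : ((k * (n - 1) : ℕ) : ℕ∞) < (n : ℕ∞) := h1.trans_lt hlt
  have h3 : k * (n - 1) < n := by exact_mod_cast h2
  have hk1' : k = 1 := by nlinarith [Nat.sub_add_cancel (show 1 ≤ n by omega)]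
  have hp2 : p = 2 := by rw [hk, hk1', pow_one]
  refine ⟨hp2, ?_⟩
  -- now digit sum
  have hm := Nat.Prime.sub_one_mul_multiplicity_factorial (n := n) Nat.prime_two
  have hem : emultiplicity 2 n.factorial = (multiplicity 2 n.factorial : ℕ∞) :=
    hfin.emultiplicity_eq_multiplicity
  have h4 : ((n - 1 : ℕ) : ℕ∞) ≤ emultiplicity 2 n.factorial := by
    subst hp2; exact pow_dvd_iff_le_emultiplicity.mp h
  rw [hem] at h4
  have h5 : n - 1 ≤ multiplicity 2 n.factorial := by exact_mod_cast h4
  have h6 : multiplicity 2 n.factorial = n - (Nat.digits 2 n).sum := by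
    omega
  have h7 : (Nat.digits 2 n).sum ≠ 0 := fun hz => hn0 (digits_two_sum_eq_zero hz)
  have h8 : (Nat.digits 2 n).sum = 1 := by omega
  exact digits_two_sum_eq_one n h8
end

section
/- For every natural number n ≥ 2, 4^(n-1) does not divide n!. -/
theorem stmt2 (n : ℕ) (hn : 2 ≤ n) : ¬ 4 ^ (n - 1) ∣ n.factorial := by
  intro h
  have h2 : (2:ℕ) ^ (2 * (n - 1)) ∣ n.factorial := by
    rw [pow_mul]; exact_mod_cast h
  have hle : 2 * (n - 1) ≤ (n.factorial).factorization 2 :=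
    (Nat.Prime.pow_dvd_iff_le_factorization Nat.prime_two n.factorial_ne_zero).mp h2
  have hfd : (n.factorial).factorization 2 = padicValNat 2 n.factorial :=
    Nat.factorization_def _ Nat.prime_two
  haveI : Fact (Nat.Prime 2) := ⟨Nat.prime_two⟩
  have key : (2 - 1) * padicValNat 2 n.factorial = n - (Nat.digits 2 n).sum :=
    sub_one_mul_padicValNat_factorial n
  have hne : Nat.digits 2 n ≠ [] := Nat.digits_ne_nil_iff_ne_zero.mpr (by omega)
  have hl := Nat.getLast_digit_ne_zero 2 (show n ≠ 0 by omega)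
  have hs : 1 ≤ (Nat.digits 2 n).sum := by
    calc 1 ≤ (Nat.digits 2 n).getLast hne := Nat.one_le_iff_ne_zero.mpr hl
    _ ≤ (Nat.digits 2 n).sum :=
      List.single_le_sum (fun _ _ => Nat.zero_le _) _ (List.getLast_mem hne)
  have hsum_le : (Nat.digits 2 n).sum ≤ n := by
    conv_rhs => rw [← Nat.ofDigits_digits 2 n]
    exact Nat.sum_le_ofDigits _ (by norm_num)
  omega
end

section
/- Let S = Q₁ × ⋯ × Q_r be a direct product of groups and let P ≤ S be a subdirect subgroup (each coordinate projection maps P onto Q_i), where each Q_i is a nonabelian simple group. Then for each i, the intersection P ∩ ker(π_i) projected to any coordinate j is either trivial or all of Q_j; more precisely, P is an internal direct product of full strips whose supports partition the index set (Scott's Lemma). -/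
/-- The support of a subgroup `D` of a direct product: the set of coordinates
where the projection of `D` is nontrivial. -/
def stripSupport {ι : Type*} (Q : ι → Type*) [∀ i, Group (Q i)]
    (D : Subgroup (∀ i, Q i)) : Set ι :=
  {i | D.map (Pi.evalMonoidHom Q i) ≠ ⊥}

/-- `D` is a full strip: it is nontrivial and each coordinate projection restricted to `D`
is either trivial, or surjective and injective. -/
def IsFullStrip {ι : Type*} (Q : ι → Type*) [∀ i, Group (Q i)]
    (D : Subgroup (∀ i, Q i)) : Prop :=
  D ≠ ⊥ ∧ ∀ i, D.map (Pi.evalMonoidHom Q i) = ⊥ ∨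
    (D.map (Pi.evalMonoidHom Q i) = ⊤ ∧
      Set.InjOn (fun x => x i) (D : Set (∀ i, Q i)))

section ScottAux

variable {ι : Type*} {Q : ι → Type*} [∀ i, Group (Q i)]

/-- The subgroup of elements of `P` vanishing on the finite set `T`. -/
def scottVanishing (P : Subgroup (∀ i, Q i)) (T : Finset ι) : Subgroup (∀ i, Q i) where
  carrier := {p | p ∈ P ∧ ∀ j ∈ T, p j = 1}
  one_mem' := ⟨P.one_mem, fun _ _ => rfl⟩
  mul_mem' := fun {a b} ha hb => ⟨P.mul_mem ha.1 hb.1, fun j hj => by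
    show a j * b j = 1
    rw [ha.2 j hj, hb.2 j hj, one_mul]⟩
  inv_mem' := fun {a} ha => ⟨P.inv_mem ha.1, fun j hj => by
    show (a j)⁻¹ = 1
    rw [ha.2 j hj, inv_one]⟩

lemma mem_scottVanishing {P : Subgroup (∀ i, Q i)} {T : Finset ι} {p : ∀ i, Q i} :
    p ∈ scottVanishing P T ↔ p ∈ P ∧ ∀ j ∈ T, p j = 1 := Iff.rfl

variable [∀ i, IsSimpleGroup (Q i)]

/-- Dichotomy: the coordinate image of a `P`-normal subgroup of a subdirect `P`
is trivial or full. -/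
lemma scott_dichotomy (P : Subgroup (∀ i, Q i))
    (hsub : ∀ i, P.map (Pi.evalMonoidHom Q i) = ⊤)
    (C : Subgroup (∀ i, Q i))
    (hn : ∀ p ∈ P, ∀ c ∈ C, p * c * p⁻¹ ∈ C) (i : ι) :
    C.map (Pi.evalMonoidHom Q i) = ⊥ ∨ C.map (Pi.evalMonoidHom Q i) = ⊤ := by
  have hN : (C.map (Pi.evalMonoidHom Q i)).Normal := by
    constructor
    intro n hn' g
    rcases Subgroup.mem_map.mp hn' with ⟨c, hc, rfl⟩
    have hg : g ∈ P.map (Pi.evalMonoidHom Q i) := (hsub i).symm ▸ Subgroup.mem_top g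
    rcases Subgroup.mem_map.mp hg with ⟨p, hp, rfl⟩
    exact Subgroup.mem_map.mpr ⟨p * c * p⁻¹, hn p hp c hc, rfl⟩
  exact IsSimpleGroup.eq_bot_or_eq_top_of_normal _ hN

/-- The key symmetry: if every element of `P` trivial at `i` is trivial at `j`,
then conversely. -/
lemma scott_symm (P : Subgroup (∀ i, Q i))
    (hsub : ∀ i, P.map (Pi.evalMonoidHom Q i) = ⊤) {i j : ι}
    (h : ∀ p ∈ P, p i = 1 → p j = 1) :
    ∀ p ∈ P, p j = 1 → p i = 1 := by
  classical
  set C : Subgroup (∀ i, Q i) := scottVanishing P {j} with hC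
  have hCP : ∀ p ∈ P, p j = 1 → p ∈ C := fun p hp hpj =>
    ⟨hp, fun k hk => by rwa [Finset.mem_singleton.mp hk]⟩
  have hn : ∀ p ∈ P, ∀ c ∈ C, p * c * p⁻¹ ∈ C := by
    intro p hp c hc
    refine ⟨P.mul_mem (P.mul_mem hp hc.1) (P.inv_mem hp), fun k hk => ?_⟩
    have hk' := hc.2 k hk
    show p k * c k * (p k)⁻¹ = 1
    rw [hk', mul_one, mul_inv_cancel]
  rcases scott_dichotomy P hsub C hn i with hbot | htop
  · intro p hp hpj
    have : p i ∈ C.map (Pi.evalMonoidHom Q i) :=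
      Subgroup.mem_map.mpr ⟨p, hCP p hp hpj, rfl⟩
    rw [hbot] at this
    exact this
  · exfalso
    have hPj : ∀ p ∈ P, p j = 1 := by
      intro p hp
      have hpi : p i ∈ C.map (Pi.evalMonoidHom Q i) := htop ▸ Subgroup.mem_top _
      rcases Subgroup.mem_map.mp hpi with ⟨q, hq, hqi⟩
      have hqi' : q i = p i := hqi
      have h1 : (q⁻¹ * p) i = 1 := by
        show (q i)⁻¹ * p i = 1
        rw [hqi']; exact inv_mul_cancel _
      have h2 := h (q⁻¹ * p) (P.mul_mem (P.inv_mem hq.1) hp) h1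
      have hqj : q j = 1 := hq.2 j (Finset.mem_singleton_self j)
      have : (q j)⁻¹ * p j = 1 := h2
      rw [hqj, inv_one, one_mul] at this
      exact this
    obtain ⟨x, hx⟩ := exists_ne (1 : Q j)
    have : x ∈ P.map (Pi.evalMonoidHom Q j) := (hsub j).symm ▸ Subgroup.mem_top x
    rcases Subgroup.mem_map.mp this with ⟨p, hp, hpj⟩
    exact hx (hpj ▸ hPj p hp)

/-- Key induction: elements of `P` vanishing on a set of coordinates not related
to `i` still project onto `Q i`. -/
lemma scott_vanishing_map_top (P : Subgroup (∀ i, Q i))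
    (hnab : ∀ i, ∃ a b : Q i, a * b ≠ b * a)
    (hsub : ∀ i, P.map (Pi.evalMonoidHom Q i) = ⊤) (i : ι) (T : Finset ι)
    (hT : ∀ j ∈ T, ¬ (∀ p ∈ P, p i = 1 → p j = 1)) :
    (scottVanishing P T).map (Pi.evalMonoidHom Q i) = ⊤ := by
  classical
  induction T using Finset.induction_on with
  | empty =>
    have : scottVanishing P (∅ : Finset ι) = P := by
      ext p; exact ⟨fun h => h.1, fun h => ⟨h, fun j hj => absurd hj (Finset.notMem_empty j)⟩⟩
    rw [this]; exact hsub i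
  | @insert j T hjT IH =>
    have hnorm : ∀ (U : Finset ι), ∀ p ∈ P, ∀ c ∈ scottVanishing P U,
        p * c * p⁻¹ ∈ scottVanishing P U := by
      intro U p hp c hc
      refine ⟨P.mul_mem (P.mul_mem hp hc.1) (P.inv_mem hp), fun k hk => ?_⟩
      show p k * c k * (p k)⁻¹ = 1
      rw [hc.2 k hk, mul_one, mul_inv_cancel]
    have hA : (scottVanishing P T).map (Pi.evalMonoidHom Q i) = ⊤ :=
      IH (fun k hk => hT k (Finset.mem_insert_of_mem hk))
    have hB : (scottVanishing P ({j} : Finset ι)).map (Pi.evalMonoidHom Q i) = ⊤ := by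
      rcases scott_dichotomy P hsub (scottVanishing P ({j} : Finset ι))
          (hnorm {j}) i with hbot | htop
      · exfalso
        apply hT j (Finset.mem_insert_self j T)
        intro p hp hpi
        apply scott_symm P hsub (i := j) (j := i) ?_ p hp hpi
        intro q hq hqj
        have : q i ∈ (scottVanishing P ({j} : Finset ι)).map (Pi.evalMonoidHom Q i) :=
          Subgroup.mem_map.mpr ⟨q, ⟨hq, fun k hk => by
            rwa [Finset.mem_singleton.mp hk]⟩, rfl⟩
        rw [hbot] at this
        exact this
      · exact htop
    rcases scott_dichotomy P hsub (scottVanishing P (insert j T))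
        (hnorm (insert j T)) i with hbot | htop
    · exfalso
      obtain ⟨a, b, hab⟩ := hnab i
      have ha : a ∈ (scottVanishing P T).map (Pi.evalMonoidHom Q i) := hA ▸ Subgroup.mem_top _
      have hb : b ∈ (scottVanishing P ({j} : Finset ι)).map (Pi.evalMonoidHom Q i) :=
        hB ▸ Subgroup.mem_top _
      rcases Subgroup.mem_map.mp ha with ⟨x, hx, hxi⟩
      rcases Subgroup.mem_map.mp hb with ⟨y, hy, hyi⟩
      have hz : x * y * x⁻¹ * y⁻¹ ∈ scottVanishing P (insert j T) := by
        refine ⟨P.mul_mem (P.mul_mem (P.mul_mem hx.1 hy.1) (P.inv_mem hx.1))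
          (P.inv_mem hy.1), fun k hk => ?_⟩
        show x k * y k * (x k)⁻¹ * (y k)⁻¹ = 1
        rcases Finset.mem_insert.mp hk with rfl | hkT
        · rw [hy.2 k (Finset.mem_singleton_self k), mul_one, inv_one, mul_one,
            mul_inv_cancel]
        · rw [hx.2 k hkT, one_mul, inv_one, mul_one, mul_inv_cancel]
      have : x i * y i * (x i)⁻¹ * (y i)⁻¹
          ∈ (scottVanishing P (insert j T)).map (Pi.evalMonoidHom Q i) :=
        Subgroup.mem_map.mpr ⟨_, hz, rfl⟩
      rw [hbot] at this
      have hxi' : x i = a := hxi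
      have hyi' : y i = b := hyi
      have h1 : a * b * a⁻¹ * b⁻¹ = 1 := by rwa [hxi', hyi'] at this
      apply hab
      have := mul_eq_one_iff_eq_inv.mp h1
      calc a * b = ((a*b*a⁻¹*b⁻¹) * b) * a := by group
      _ = b * a := by rw [h1, one_mul]
    · exact htop

end ScottAux

/-- Scott's Lemma: a subdirect subgroup of a finite direct product of nonabelian
simple groups is the direct product of full strips whose supports partition the index set. -/
theorem stmt4 {ι : Type*} [Fintype ι] (Q : ι → Type*) [∀ i, Group (Q i)]
    [∀ i, IsSimpleGroup (Q i)] (hnab : ∀ i, ∃ a b : Q i, a * b ≠ b * a)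
    (P : Subgroup (∀ i, Q i))
    (hsub : ∀ i, P.map (Pi.evalMonoidHom Q i) = ⊤) :
    ∃ (m : ℕ) (D : Fin m → Subgroup (∀ i, Q i)),
      (∀ j, IsFullStrip Q (D j)) ∧
      (∀ j j', j ≠ j' → Disjoint (stripSupport Q (D j)) (stripSupport Q (D j'))) ∧
      (⋃ j, stripSupport Q (D j)) = Set.univ ∧
      (⨆ j, D j) = P := by
  classical
  set r : ι → ι → Prop := fun i j => ∀ p ∈ P, p i = 1 → p j = 1 with hr
  have hrefl : ∀ i, r i i := fun i p _ h => h
  have hsymm : ∀ {i j}, r i j → r j i := fun {i j} h => scott_symm P hsub h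
  have htrans : ∀ {i j k}, r i j → r j k → r i k :=
    fun {i j k} h1 h2 p hp hi => h2 p hp (h1 p hp hi)
  set s : Setoid ι := ⟨r, ⟨fun i => hrefl i, hsymm, htrans⟩⟩ with hs
  haveI : DecidableEq (Quotient s) := Classical.decEq _
  set m : ℕ := Fintype.card (Quotient s) with hm
  set e : Fin m ≃ Quotient s := (Fintype.equivFin (Quotient s)).symm with he
  -- the strip associated to a class
  set strip : Quotient s → Subgroup (∀ i, Q i) :=
    fun c => scottVanishing P (Finset.univ.filter (fun j => Quotient.mk s j ≠ c)) with hstrip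
  have mem_strip : ∀ (c : Quotient s) (p : ∀ i, Q i),
      p ∈ strip c ↔ p ∈ P ∧ ∀ j, Quotient.mk s j ≠ c → p j = 1 := by
    intro c p
    constructor
    · rintro ⟨hp, hv⟩
      exact ⟨hp, fun j hj => hv j (Finset.mem_filter.mpr ⟨Finset.mem_univ j, hj⟩)⟩
    · rintro ⟨hp, hv⟩
      exact ⟨hp, fun j hj => hv j (Finset.mem_filter.mp hj).2⟩
  -- projection of a strip onto a coordinate in its class is full
  have htop : ∀ (c : Quotient s) (i : ι), Quotient.mk s i = c →
      (strip c).map (Pi.evalMonoidHom Q i) = ⊤ := by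
    intro c i hi
    apply scott_vanishing_map_top P hnab hsub
    intro j hj hrij
    exact (Finset.mem_filter.mp hj).2 (hi ▸ Quot.sound (hsymm hrij))
  -- projection of a strip onto a coordinate outside its class is trivial
  have hbot : ∀ (c : Quotient s) (j : ι), Quotient.mk s j ≠ c →
      (strip c).map (Pi.evalMonoidHom Q j) = ⊥ := by
    intro c j hj
    rw [eq_bot_iff]
    rintro x hx
    rcases Subgroup.mem_map.mp hx with ⟨d, hd, rfl⟩
    have := ((mem_strip c d).mp hd).2 j hj
    simpa using this
  -- each strip is a full strip
  have hfull : ∀ c : Quotient s, IsFullStrip Q (strip c) := by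
    intro c
    constructor
    · intro hc
      have h1 := htop c c.out (Quotient.out_eq c)
      rw [hc, Subgroup.map_bot] at h1
      exact absurd h1 bot_ne_top
    · intro i
      by_cases hi : Quotient.mk s i = c
      · refine Or.inr ⟨htop c i hi, ?_⟩
        intro x hx y hy hxy
        have hx' := (mem_strip c x).mp hx
        have hy' := (mem_strip c y).mp hy
        have hmem : x⁻¹ * y ∈ strip c := (strip c).mul_mem ((strip c).inv_mem hx) hy
        have h1 : (x⁻¹ * y) i = 1 := by
          show (x i)⁻¹ * y i = 1
          simp only at hxy
          rw [hxy]; exact inv_mul_cancel _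
        have hone : ∀ j, (x⁻¹ * y) j = 1 := by
          intro j
          by_cases hj : Quotient.mk s j = c
          · have hij : r i j := Quotient.exact (hi.trans hj.symm)
            exact hij _ ((mem_strip c _).mp hmem).1 h1
          · exact ((mem_strip c _).mp hmem).2 j hj
        have : x⁻¹ * y = 1 := funext hone
        calc x = x * (x⁻¹ * y) := by rw [this, mul_one]
        _ = y := by group
      · exact Or.inl (hbot c i hi)
  -- supports
  have hsupp : ∀ c : Quotient s, stripSupport Q (strip c) = {j | Quotient.mk s j = c} := by
    intro c
    ext j
    simp only [stripSupport, Set.mem_setOf_eq]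
    constructor
    · intro h
      by_contra hj
      exact h (hbot c j hj)
    · intro hj h
      have := htop c j hj
      rw [h] at this
      exact absurd this bot_ne_top
  refine ⟨m, fun k => strip (e k), fun k => hfull (e k), ?_, ?_, ?_⟩
  · intro k k' hkk'
    rw [hsupp, hsupp]
    rw [Set.disjoint_left]
    intro j hj hj'
    exact hkk' (e.injective (hj ▸ hj'))
  · rw [Set.eq_univ_iff_forall]
    intro j
    refine Set.mem_iUnion.mpr ⟨e.symm (Quotient.mk s j), ?_⟩
    rw [hsupp]
    exact (e.apply_symm_apply _).symm ▸ rfl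
  · apply le_antisymm
    · exact iSup_le fun k => fun p hp => ((mem_strip _ p).mp hp).1
    · -- key induction over classes
      have key : ∀ (T : Finset (Quotient s)) (p : ∀ i, Q i), p ∈ P →
          (∀ j, Quotient.mk s j ∉ T → p j = 1) → p ∈ ⨆ k, strip (e k) := by
        intro T
        induction T using Finset.induction_on with
        | empty =>
          intro p _ hp
          have : p = 1 := funext fun j => hp j (Finset.notMem_empty _)
          rw [this]
          exact one_mem _
        | @insert c T hcT IH =>
          intro p hpP hpv
          -- find the strip component of p at class c
          have hi0 : Quotient.mk s c.out = c := Quotient.out_eq c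
          have : p c.out ∈ (strip c).map (Pi.evalMonoidHom Q c.out) :=
            (htop c c.out hi0) ▸ Subgroup.mem_top _
          rcases Subgroup.mem_map.mp this with ⟨d, hd, hdi⟩
          have hd' := (mem_strip c d).mp hd
          have hdj : ∀ j, Quotient.mk s j = c → d j = p j := by
            intro j hj
            have hmem : d⁻¹ * p ∈ P := P.mul_mem (P.inv_mem hd'.1) hpP
            have h1 : (d⁻¹ * p) c.out = 1 := by
              show (d c.out)⁻¹ * p c.out = 1
              have hdi' : d c.out = p c.out := hdi
              rw [hdi']; exact inv_mul_cancel _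
            have hrel : r c.out j := Quotient.exact (hi0.trans hj.symm)
            have h2 : (d j)⁻¹ * p j = 1 := hrel _ hmem h1
            have := mul_eq_one_iff_eq_inv.mp h2
            calc d j = d j * ((d j)⁻¹ * p j) := by rw [h2, mul_one]
            _ = p j := by group
          have hq : d⁻¹ * p ∈ P := P.mul_mem (P.inv_mem hd'.1) hpP
          have hqv : ∀ j, Quotient.mk s j ∉ T → (d⁻¹ * p) j = 1 := by
            intro j hj
            show (d j)⁻¹ * p j = 1
            by_cases hjc : Quotient.mk s j = c
            · rw [hdj j hjc]; exact inv_mul_cancel _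
            · have hpj : p j = 1 := hpv j (by
                intro hmem
                rcases Finset.mem_insert.mp hmem with h | h
                · exact hjc h
                · exact hj h)
              rw [hd'.2 j hjc, hpj, inv_one, one_mul]
          have hdsup : d ∈ ⨆ k, strip (e k) := by
            have : strip c ≤ ⨆ k, strip (e k) := by
              have hec : strip c = strip (e (e.symm c)) := by rw [e.apply_symm_apply]
              rw [hec]
              exact le_iSup (fun k => strip (e k)) (e.symm c)
            exact this hd
          have hqsup : d⁻¹ * p ∈ ⨆ k, strip (e k) := IH (d⁻¹ * p) hq hqv
          have : p = d * (d⁻¹ * p) := by group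
          rw [this]
          exact mul_mem hdsup hqsup
      intro p hp
      exact key Finset.univ p hp (fun j hj => absurd (Finset.mem_univ _) hj)
end

section
/- Let q ≥ 2 be a natural number. Then there exists an odd prime p dividing q² + 1 that does not divide q³·(q⁶ − 1). -/
theorem stmt12 (q : ℕ) (hq : 2 ≤ q) :
    ∃ p : ℕ, p.Prime ∧ Odd p ∧ p ∣ q ^ 2 + 1 ∧ ¬ p ∣ q ^ 3 * (q ^ 6 - 1) := by
  -- first obtain an odd prime p dividing q^2+1
  obtain ⟨p, hp, hodd, hpdvd⟩ :
      ∃ p : ℕ, p.Prime ∧ Odd p ∧ p ∣ q ^ 2 + 1 := by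
    rcases Nat.even_or_odd q with he | ho
    · -- q even: q^2+1 is odd and > 1
      have hodd1 : Odd (q ^ 2 + 1) := by
        obtain ⟨k, hk⟩ := he
        exact ⟨2 * k ^ 2, by subst hk; ring⟩
      have hgt : q ^ 2 + 1 ≠ 1 := by nlinarith
      refine ⟨(q ^ 2 + 1).minFac, Nat.minFac_prime hgt, ?_, Nat.minFac_dvd _⟩
      have h2 : (q ^ 2 + 1).minFac ≠ 2 := by
        intro h
        have := Nat.minFac_dvd (q ^ 2 + 1)
        rw [h] at this
        exact (Nat.not_even_iff_odd.mpr hodd1) ((even_iff_two_dvd).mpr this)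
      exact (Nat.minFac_prime hgt).odd_of_ne_two h2
    · -- q odd: q^2+1 = 2*m with m odd, m > 1
      obtain ⟨k, hk⟩ := ho
      have hk1 : 1 ≤ k := by omega
      set m := 2 * k ^ 2 + 2 * k + 1 with hm
      have hmeq : q ^ 2 + 1 = 2 * m := by subst hk; ring
      have hmodd : Odd m := ⟨k ^ 2 + k, by ring⟩
      have hm1 : m ≠ 1 := by nlinarith
      refine ⟨m.minFac, Nat.minFac_prime hm1, ?_, dvd_trans (Nat.minFac_dvd m) ⟨2, by omega⟩⟩
      have h2 : m.minFac ≠ 2 := by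
        intro h
        have := Nat.minFac_dvd m
        rw [h] at this
        exact (Nat.not_even_iff_odd.mpr hmodd) ((even_iff_two_dvd).mpr this)
      exact (Nat.minFac_prime hm1).odd_of_ne_two h2
  refine ⟨p, hp, hodd, hpdvd, ?_⟩
  intro h
  rcases (Nat.Prime.dvd_mul hp).mp h with h1 | h2
  · -- p ∣ q^3 → p ∣ q → p ∣ q^2 → p ∣ 1
    have hpq : p ∣ q := hp.dvd_of_dvd_pow h1
    have : p ∣ q ^ 2 := dvd_pow hpq (by norm_num)
    have h1' : p ∣ 1 := by
      have := Nat.dvd_sub hpdvd this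
      simpa using this
    exact hp.one_lt.ne' (Nat.dvd_one.mp h1')
  · -- p ∣ q^6 - 1, but also p ∣ q^6 + 1, so p ∣ 2, contradicting oddness
    have key : (q ^ 2 + 1) * (q ^ 4 + 1) = (q ^ 6 + 1) + q ^ 2 * (q ^ 2 + 1) := by ring
    have hA : p ∣ (q ^ 6 + 1) + q ^ 2 * (q ^ 2 + 1) := key ▸ Dvd.dvd.mul_right hpdvd _
    have hB : p ∣ q ^ 2 * (q ^ 2 + 1) := Dvd.dvd.mul_left hpdvd _
    have hC : p ∣ q ^ 6 + 1 := by
      have := Nat.dvd_sub hA hB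
      simpa using this
    have h2' : p ∣ 2 := by
      have hge : 1 ≤ q ^ 6 := Nat.one_le_pow _ _ (by omega)
      have := Nat.dvd_sub hC h2
      have heq : (q ^ 6 + 1) - (q ^ 6 - 1) = 2 := by omega
      rwa [heq] at this
    have : p = 2 := (Nat.prime_dvd_prime_iff_eq hp Nat.prime_two).mp h2'
    rw [this] at hodd
    exact (Nat.not_even_iff_odd.mpr hodd) (even_two)
end
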